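/- Let λ₀ ∈ ℝ^p, let Θ : ℝ^p × ℝ^p → ℝ^p be continuously differentiable on a neighborhood of (λ₀, φ(λ₀)), let φ : ℝ^p → ℝ^p be continuous at λ₀, and suppose Θ(λ, φ(λ)) = 0 for all λ in a neighborhood of λ₀. Let ψ₁, ψ₂ : (−ε, ε) → ℝ^p be differentiable at 0 with ψ₁(0) = ψ₂(0) = λ₀ and ψ₁'(0) ≠ ψ₂'(0). Then the limit as t → 0 (over t with ψ₂(t) ≠ ψ₁(t)) of ‖Θ(ψ₁(t), φ(ψ₂(t)))‖ / ‖ψ₂(t) − ψ₁(t)‖ exists and equals ‖D₁Θ(λ₀, φ(λ₀))·( (ψ₂'(0) − ψ₁'(0)) / ‖ψ₂'(0) − ψ₁'(0)‖ )‖, where D₁Θ denotes the partial derivative of Θ with respect to its first (λ) variable. (Equality (8) in the proof of Lemma 3.4.) -/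

import Mathlib

open Filter

/-- Equality (8) in the proof of Lemma 3.4: if `Θ(λ, φ(λ)) = 0` near `λ₀`,
`Θ` is `C¹` near `(λ₀, φ(λ₀))`, `φ` is continuous at `λ₀`, and `ψ₁, ψ₂` are
curves through `λ₀` with distinct velocities at `0`, then
`‖Θ(ψ₁(t), φ(ψ₂(t)))‖ / ‖ψ₂(t) − ψ₁(t)‖` tends, as `t → 0` over the set where
`ψ₂(t) ≠ ψ₁(t)`, to `‖D₁Θ(λ₀, φ(λ₀))((ψ₂'(0) − ψ₁'(0))/‖ψ₂'(0) − ψ₁'(0)‖)‖`,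
where `D₁Θ` is the partial derivative of `Θ` in its first variable. -/
theorem equality_8 (p : ℕ) (hp : 0 < p)
    (Θ : EuclideanSpace ℝ (Fin p) × EuclideanSpace ℝ (Fin p) → EuclideanSpace ℝ (Fin p))
    (φ : EuclideanSpace ℝ (Fin p) → EuclideanSpace ℝ (Fin p))
    (lam₀ : EuclideanSpace ℝ (Fin p))
    (hΘC1 : ∀ᶠ z in nhds (lam₀, φ lam₀), ContDiffAt ℝ 1 Θ z)
    (hφc : ContinuousAt φ lam₀)
    (hzero : ∀ᶠ lam in nhds lam₀, Θ (lam, φ lam) = 0)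
    (ψ₁ ψ₂ : ℝ → EuclideanSpace ℝ (Fin p))
    (v₁ v₂ : EuclideanSpace ℝ (Fin p))
    (hψ₁0 : ψ₁ 0 = lam₀) (hψ₂0 : ψ₂ 0 = lam₀)
    (hψ₁ : HasDerivAt ψ₁ v₁ 0) (hψ₂ : HasDerivAt ψ₂ v₂ 0)
    (hne : v₁ ≠ v₂) :
    Tendsto (fun t : ℝ => ‖Θ (ψ₁ t, φ (ψ₂ t))‖ / ‖ψ₂ t - ψ₁ t‖)
      (nhdsWithin 0 {t : ℝ | ψ₂ t ≠ ψ₁ t})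
      (nhds ‖(fderiv ℝ (fun lam => Θ (lam, φ lam₀)) lam₀)
        ((‖v₂ - v₁‖)⁻¹ • (v₂ - v₁))‖) := by
  classical
  set c := φ lam₀ with hc
  have hΘz : ContDiffAt ℝ 1 Θ (lam₀, c) := hΘC1.self_of_nhds
  have hstrict : HasStrictFDerivAt Θ (fderiv ℝ Θ (lam₀, c)) (lam₀, c) :=
    hΘz.hasStrictFDerivAt one_ne_zero
  set D := fderiv ℝ Θ (lam₀, c) with hD
  set A : EuclideanSpace ℝ (Fin p) →L[ℝ] EuclideanSpace ℝ (Fin p) := D.comp ((ContinuousLinearMap.id ℝ (EuclideanSpace ℝ (Fin p))).prod 0) with hA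
  have hAx : ∀ x : EuclideanSpace ℝ (Fin p), A x = D (x, 0) := fun x => rfl
  -- identify the fderiv in the goal
  have hincl : HasFDerivAt (fun lam : EuclideanSpace ℝ (Fin p) => (lam, c))
      ((ContinuousLinearMap.id ℝ (EuclideanSpace ℝ (Fin p))).prod (0 : EuclideanSpace ℝ (Fin p) →L[ℝ] EuclideanSpace ℝ (Fin p))) lam₀ :=
    HasFDerivAt.prodMk (hasFDerivAt_id lam₀) (hasFDerivAt_const c lam₀)
  have hmap : HasFDerivAt (fun lam : EuclideanSpace ℝ (Fin p) => Θ (lam, c)) A lam₀ :=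
    (HasFDerivAt.comp lam₀ hstrict.hasFDerivAt hincl)
  rw [hmap.fderiv]
  -- basic notation
  set w : EuclideanSpace ℝ (Fin p) := v₂ - v₁ with hw
  have hwne : w ≠ 0 := sub_ne_zero.mpr (Ne.symm hne)
  set S : Set ℝ := {t : ℝ | ψ₂ t ≠ ψ₁ t} with hS
  set δ : ℝ → EuclideanSpace ℝ (Fin p) := fun t => ψ₂ t - ψ₁ t with hδ
  have hδd : HasDerivAt δ w 0 := hψ₂.sub hψ₁
  have hδ0 : δ 0 = 0 := by simp [hδ, hψ₁0, hψ₂0]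
  have hFle : nhdsWithin (0:ℝ) S ≤ nhdsWithin (0:ℝ) {(0:ℝ)}ᶜ := by
    refine nhdsWithin_mono 0 ?_
    intro t ht h0
    rw [Set.mem_singleton_iff] at h0
    subst h0
    exact ht (by simp [hψ₁0, hψ₂0])
  -- slope tendsto
  have hs : Tendsto (fun t : ℝ => t⁻¹ • δ t) (nhdsWithin (0:ℝ) {(0:ℝ)}ᶜ) (nhds w) := by
    have := hasDerivAt_iff_tendsto_slope.mp hδd
    refine this.congr' ?_
    filter_upwards [self_mem_nhdsWithin] with t ht
    simp [slope, hδ0]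
  -- main term
  have hMain : Tendsto (fun t : ℝ => ‖A (δ t)‖ / ‖δ t‖) (nhdsWithin (0:ℝ) {(0:ℝ)}ᶜ)
      (nhds (‖A w‖ / ‖w‖)) := by
    have hcont : Tendsto (fun t : ℝ => ‖A (t⁻¹ • δ t)‖ / ‖t⁻¹ • δ t‖)
        (nhdsWithin (0:ℝ) {(0:ℝ)}ᶜ) (nhds (‖A w‖ / ‖w‖)) := by
      exact (((A.continuous.tendsto w).comp hs).norm).div hs.norm
        (norm_ne_zero_iff.mpr hwne)
    refine hcont.congr' ?_
    filter_upwards [self_mem_nhdsWithin] with t ht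
    have ht0 : t ≠ 0 := ht
    rw [map_smul, norm_smul, norm_smul, Real.norm_eq_abs, abs_inv,
      mul_div_mul_left _ _ (inv_ne_zero (abs_ne_zero.mpr ht0))]
  -- little-o error term
  have hψ₂t : Tendsto ψ₂ (nhdsWithin (0:ℝ) S) (nhds lam₀) := by
    have := hψ₂.continuousAt.tendsto
    rw [hψ₂0] at this
    exact this.mono_left nhdsWithin_le_nhds
  have hψ₁t : Tendsto ψ₁ (nhdsWithin (0:ℝ) S) (nhds lam₀) := by
    have := hψ₁.continuousAt.tendsto
    rw [hψ₁0] at this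
    exact this.mono_left nhdsWithin_le_nhds
  have hφt : Tendsto (fun t => φ (ψ₂ t)) (nhdsWithin (0:ℝ) S) (nhds c) :=
    hφc.tendsto.comp hψ₂t
  have hG : Tendsto (fun t : ℝ => ((ψ₁ t, φ (ψ₂ t)), (ψ₂ t, φ (ψ₂ t))))
      (nhdsWithin (0:ℝ) S) (nhds ((lam₀, c), (lam₀, c))) :=
    (hψ₁t.prodMk_nhds hφt).prodMk_nhds (hψ₂t.prodMk_nhds hφt)
  have hlo : (fun t : ℝ => Θ (ψ₁ t, φ (ψ₂ t)) - Θ (ψ₂ t, φ (ψ₂ t))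
        - D ((ψ₁ t, φ (ψ₂ t)) - (ψ₂ t, φ (ψ₂ t))))
      =o[nhdsWithin (0:ℝ) S] fun t => (ψ₁ t, φ (ψ₂ t)) - (ψ₂ t, φ (ψ₂ t)) :=
    hstrict.isLittleO.comp_tendsto hG
  have hlo' : (fun t : ℝ => Θ (ψ₁ t, φ (ψ₂ t)) - Θ (ψ₂ t, φ (ψ₂ t))
        - D ((ψ₁ t, φ (ψ₂ t)) - (ψ₂ t, φ (ψ₂ t))))
      =o[nhdsWithin (0:ℝ) S] δ := by
    refine hlo.trans_isBigO (Asymptotics.isBigO_of_le _ fun t => ?_)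
    have : (ψ₁ t, φ (ψ₂ t)) - (ψ₂ t, φ (ψ₂ t)) = (ψ₁ t - ψ₂ t, (0:EuclideanSpace ℝ (Fin p))) := by
      simp [Prod.ext_iff]
    rw [this, Prod.norm_def]
    simp [hδ, norm_sub_rev (ψ₁ t) (ψ₂ t)]
  have hErr : Tendsto (fun t : ℝ => ‖Θ (ψ₁ t, φ (ψ₂ t)) - Θ (ψ₂ t, φ (ψ₂ t))
        - D ((ψ₁ t, φ (ψ₂ t)) - (ψ₂ t, φ (ψ₂ t)))‖ / ‖δ t‖)
      (nhdsWithin (0:ℝ) S) (nhds 0) :=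
    hlo'.norm_norm.tendsto_div_nhds_zero
  -- eventually vanishing of Θ along ψ₂
  have hz' : ∀ᶠ t in nhdsWithin (0:ℝ) S, Θ (ψ₂ t, φ (ψ₂ t)) = 0 := hψ₂t.eventually hzero
  -- assemble
  have key : Tendsto (fun t : ℝ => ‖Θ (ψ₁ t, φ (ψ₂ t))‖ / ‖δ t‖)
      (nhdsWithin (0:ℝ) S) (nhds (‖A w‖ / ‖w‖)) := by
    refine (hMain.mono_left hFle).congr_dist ?_
    refine squeeze_zero' (Eventually.of_forall fun t => dist_nonneg) ?_ hErr
    filter_upwards [self_mem_nhdsWithin, hz'] with t ht hzt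
    have hδne : δ t ≠ 0 := sub_ne_zero.mpr ht
    have hδpos : (0:ℝ) < ‖δ t‖ := norm_pos_iff.mpr hδne
    have hsub : (ψ₁ t, φ (ψ₂ t)) - (ψ₂ t, φ (ψ₂ t)) = (ψ₁ t - ψ₂ t, (0:EuclideanSpace ℝ (Fin p))) := by
      simp [Prod.ext_iff]
    have hDval : D ((ψ₁ t, φ (ψ₂ t)) - (ψ₂ t, φ (ψ₂ t))) = -(A (δ t)) := by
      rw [hsub, ← hAx, ← map_neg]
      congr 1
      simp [hδ]
    rw [Real.dist_eq, div_sub_div_same, abs_div, abs_of_pos hδpos]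
    gcongr
    calc |‖A (δ t)‖ - ‖Θ (ψ₁ t, φ (ψ₂ t))‖|
        = |‖A (δ t)‖ - ‖-Θ (ψ₁ t, φ (ψ₂ t))‖| := by rw [norm_neg]
      _ ≤ ‖A (δ t) - -Θ (ψ₁ t, φ (ψ₂ t))‖ := abs_norm_sub_norm_le _ _
      _ = ‖Θ (ψ₁ t, φ (ψ₂ t)) - Θ (ψ₂ t, φ (ψ₂ t))
            - D ((ψ₁ t, φ (ψ₂ t)) - (ψ₂ t, φ (ψ₂ t)))‖ := by
          rw [hzt, hDval]
          congr 1
          abel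
  have hfinal : ‖A w‖ / ‖w‖ = ‖A (‖w‖⁻¹ • w)‖ := by
    rw [map_smul, norm_smul, norm_inv, norm_norm, inv_mul_eq_div]
  rw [← hfinal] at *
  exact key
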